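/- For every integer n ≥ 5, ι(K_n □ C_n) = n, where K_n is the complete graph on n vertices and C_n is the cycle on n vertices. -/

import Mathlib

/-- The closed neighborhood `N[A]` of a set of vertices. -/
def closedNbhd {V : Type*} (G : SimpleGraph V) (A : Set V) : Set V :=
  {v | v ∈ A ∨ ∃ a ∈ A, G.Adj a v}

/-- A set of vertices is independent if it contains no edge. -/
def IndepSet {V : Type*} (G : SimpleGraph V) (S : Set V) : Prop :=
  ∀ u ∈ S, ∀ v ∈ S, ¬ G.Adj u v

/-- `A` is isolating if the vertices outside `N[A]` form an independent set. -/
def IsIsolating {V : Type*} (G : SimpleGraph V) (A : Set V) : Prop :=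
  IndepSet G (closedNbhd G A)ᶜ

/-- The isolation number `ι(G)`. -/
noncomputable def isolationNum {V : Type*} (G : SimpleGraph V) : ℕ :=
  sInf {n | ∃ A : Set V, IsIsolating G A ∧ A.ncard = n}

/-- `D` is a dominating set if `N[D] = V(G)`. -/
def IsDominating {V : Type*} (G : SimpleGraph V) (D : Set V) : Prop :=
  closedNbhd G D = Set.univ

/-- The domination number `γ(G)`. -/
noncomputable def dominationNum {V : Type*} (G : SimpleGraph V) : ℕ :=
  sInf {n | ∃ D : Set V, IsDominating G D ∧ D.ncard = n}

section Aux

open SimpleGraph Finset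
open Fin.NatCast

variable {n : ℕ}

/-- The diagonal is isolating (in fact dominating). -/
lemma diag_isolating :
    IsIsolating ((⊤ : SimpleGraph (Fin n)).boxProd (SimpleGraph.cycleGraph n))
      (Set.range fun i : Fin n => (i, i)) := by
  have hdom : closedNbhd ((⊤ : SimpleGraph (Fin n)).boxProd (SimpleGraph.cycleGraph n))
      (Set.range fun i : Fin n => (i, i)) = Set.univ := by
    ext ⟨k, j⟩
    simp only [Set.mem_univ, iff_true, closedNbhd, Set.mem_setOf_eq]
    by_cases hkj : k = j
    · exact Or.inl ⟨k, by rw [hkj]⟩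
    · refine Or.inr ⟨(j, j), ⟨j, rfl⟩, ?_⟩
      rw [SimpleGraph.boxProd_adj]
      exact Or.inl ⟨by simpa using (Ne.symm hkj), rfl⟩
  intro u hu
  rw [hdom] at hu
  simp at hu

/-- Lower bound: every isolating set of `K_n □ C_n` has at least `n` vertices. -/
lemma lower_bound (hn : 5 ≤ n) (A : Set (Fin n × Fin n))
    (hA : IsIsolating ((⊤ : SimpleGraph (Fin n)).boxProd (SimpleGraph.cycleGraph n)) A) :
    n ≤ A.ncard := by
  classical
  haveI : NeZero n := ⟨by omega⟩
  by_contra hlt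
  push_neg at hlt
  set G := (⊤ : SimpleGraph (Fin n)).boxProd (SimpleGraph.cycleGraph n) with hG
  set A' : Finset (Fin n × Fin n) := A.toFinset with hA'
  have hcard : A.ncard = A'.card := Set.ncard_eq_toFinset_card' A
  set c : Fin n → ℕ := fun j => (A'.filter (fun p => p.2 = j)).card with hc
  have hsum : ∑ j, c j = A'.card :=
    (Finset.card_eq_sum_card_fiberwise (f := Prod.snd) (t := Finset.univ)
      (fun x _ => Finset.mem_univ _)).symm
  have hsum_le : ∑ j, c j ≤ n - 1 := by omega
  -- cast helpers
  have castinj : ∀ a b : ℕ, a < n → b < n → (a : Fin n) = (b : Fin n) → a = b := by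
    intro a b ha hb h
    have := congrArg Fin.val h
    rwa [Fin.val_cast_of_lt ha, Fin.val_cast_of_lt hb] at this
  have addcast : ∀ (m : Fin n) (a b : ℕ),
      m + (a : Fin n) + (b : Fin n) = m + ((a + b : ℕ) : Fin n) := by
    intro m a b; rw [add_assoc, Nat.cast_add]
  have castmod : ∀ a : ℕ, ((a + n : ℕ) : Fin n) = (a : Fin n) := by
    intro a; rw [Nat.cast_add, Fin.natCast_self, add_zero]
  have fne : ∀ (m : Fin n) (a b : ℕ), a < n → b < n → a ≠ b →
      m + (a : Fin n) ≠ m + (b : Fin n) := by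
    intro m a b ha hb hab h
    exact hab (castinj a b ha hb (add_left_cancel h))
  have sub_one_eq : ∀ m : Fin n, m - 1 = m + ((n - 1 : ℕ) : Fin n) := by
    intro m
    have h1 : ((n - 1 : ℕ) : Fin n) = -1 := by
      rw [eq_neg_iff_add_eq_zero, ← Nat.cast_one (R := Fin n), ← Nat.cast_add]
      have : n - 1 + 1 = n := by omega
      rw [this, Fin.natCast_self]
    rw [h1, sub_eq_add_neg]
  have hone : ((1 : Fin n)).val = 1 := by
    rw [← Nat.cast_one (R := Fin n), Fin.val_cast_of_lt (by omega)]
  -- key column lemma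
  have key : ∀ m : Fin n, c m = 0 →
      n - 1 ≤ c (m + ((n - 1 : ℕ) : Fin n)) + c (m + ((1 : ℕ) : Fin n)) := by
    intro m hm
    have hm' : (A'.filter (fun p => p.2 = m)).card = 0 := hm
    have hmem : ∀ p : Fin n × Fin n, p ∈ A → p.2 ≠ m := by
      intro p hp heq
      have : p ∈ A'.filter (fun p => p.2 = m) := by
        simp [hA', Set.mem_toFinset, hp, heq]
      have := Finset.card_pos.mpr ⟨p, this⟩
      omega
    set T : Finset (Fin n) := Finset.univ.filter (fun i => (i, m) ∈ closedNbhd G A) with hT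
    have hTc : Tᶜ.card ≤ 1 := by
      rw [Finset.card_le_one]
      intro i1 h1 i2 h2
      by_contra hne
      simp only [Finset.mem_compl, hT, Finset.mem_filter, Finset.mem_univ, true_and] at h1 h2
      refine hA (i1, m) h1 (i2, m) h2 ?_
      rw [hG, SimpleGraph.boxProd_adj]
      exact Or.inl ⟨by simpa using hne, rfl⟩
    have hTcard : n - 1 ≤ T.card := by
      have h1 := Finset.card_compl T
      have h2 := Finset.card_le_univ T
      simp only [Fintype.card_fin] at h1 h2
      omega
    have hsubset : T ⊆ ((A'.filter (fun p => p.2 = m + ((n-1:ℕ) : Fin n))).image Prod.fst) ∪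
        ((A'.filter (fun p => p.2 = m + ((1:ℕ) : Fin n))).image Prod.fst) := by
      intro i hi
      simp only [hT, Finset.mem_filter, Finset.mem_univ, true_and] at hi
      rcases hi with hi | ⟨a, haA, hadj⟩
      · exact absurd rfl (hmem _ hi)
      · rw [hG, SimpleGraph.boxProd_adj] at hadj
        rcases hadj with ⟨_, h2⟩ | ⟨h2, h1⟩
        · exact absurd h2 (hmem _ haA)
        · rw [SimpleGraph.cycleGraph_adj'] at h2
          have haA' : a ∈ A' := by rw [hA', Set.mem_toFinset]; exact haA
          rcases h2 with h2 | h2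
          · -- a.2 - m = 1, so a.2 = m + 1
            have he : a.2 = m + ((1:ℕ) : Fin n) := by
              have h3 : a.2 - m = 1 := by apply Fin.ext; rw [h2, hone]
              have h4 := sub_eq_iff_eq_add.mp h3
              rw [h4, add_comm, Nat.cast_one]
            refine Finset.mem_union_right _ (Finset.mem_image.mpr ⟨a, ?_, h1⟩)
            exact Finset.mem_filter.mpr ⟨haA', he⟩
          · -- m - a.2 = 1, so a.2 = m - 1
            have he : a.2 = m + ((n-1:ℕ) : Fin n) := by
              have h3 : (i, m).2 - a.2 = 1 := by apply Fin.ext; rw [h2, hone]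
              have h4 : a.2 = m - 1 := by
                have := sub_eq_iff_eq_add.mp h3
                simp only at this
                rw [this]; exact (add_sub_cancel_left _ _).symm
              rw [h4, sub_one_eq]
            refine Finset.mem_union_left _ (Finset.mem_image.mpr ⟨a, ?_, h1⟩)
            exact Finset.mem_filter.mpr ⟨haA', he⟩
    calc n - 1 ≤ T.card := hTcard
      _ ≤ _ := Finset.card_le_card hsubset
      _ ≤ ((A'.filter (fun p => p.2 = m + ((n-1:ℕ) : Fin n))).image Prod.fst).card
          + ((A'.filter (fun p => p.2 = m + ((1:ℕ) : Fin n))).image Prod.fst).card :=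
        Finset.card_union_le _ _
      _ ≤ c (m + ((n - 1 : ℕ) : Fin n)) + c (m + ((1 : ℕ) : Fin n)) :=
        Nat.add_le_add (Finset.card_image_le) (Finset.card_image_le)
  -- there is an empty column
  have hempty : ∃ m : Fin n, c m = 0 := by
    by_contra hq
    push_neg at hq
    have : ∀ j : Fin n, 1 ≤ c j := fun j => Nat.one_le_iff_ne_zero.mpr (hq j)
    have : (n : ℕ) ≤ ∑ j, c j := by
      calc (n : ℕ) = ∑ _j : Fin n, 1 := by simp
        _ ≤ ∑ j, c j := Finset.sum_le_sum (fun j _ => this j)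
    omega
  obtain ⟨m, hm⟩ := hempty
  -- all mass sits in the two columns next to m
  have hkey := key m hm
  have hne12 : m + ((n-1:ℕ) : Fin n) ≠ m + ((1:ℕ) : Fin n) :=
    fne m (n-1) 1 (by omega) (by omega) (by omega)
  have hpair : c (m + ((n-1:ℕ) : Fin n)) + c (m + ((1:ℕ) : Fin n)) ≤ ∑ j, c j := by
    have hs := Finset.sum_le_sum_of_subset
      (Finset.subset_univ ({m + ((n-1:ℕ) : Fin n), m + ((1:ℕ) : Fin n)} : Finset (Fin n)))
      (f := c)
    have nm : m + ((n-1:ℕ) : Fin n) ∉ ({m + ((1:ℕ) : Fin n)} : Finset (Fin n)) := by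
      simp only [Finset.mem_singleton]; exact hne12
    rwa [Finset.sum_insert nm, Finset.sum_singleton] at hs
  have zero : ∀ k : Fin n, k ≠ m + ((n-1:ℕ) : Fin n) → k ≠ m + ((1:ℕ) : Fin n) → c k = 0 := by
    intro k hk1 hk2
    have hsub : ({m + ((n-1:ℕ) : Fin n), m + ((1:ℕ) : Fin n), k} : Finset (Fin n)) ⊆
        Finset.univ := Finset.subset_univ _
    have nm1 : m + ((n-1:ℕ) : Fin n) ∉ ({m + ((1:ℕ) : Fin n), k} : Finset (Fin n)) := by
      simp only [Finset.mem_insert, Finset.mem_singleton]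
      push_neg
      exact ⟨hne12, fun h => hk1 h.symm⟩
    have nm2 : m + ((1:ℕ) : Fin n) ∉ ({k} : Finset (Fin n)) := by
      simp only [Finset.mem_singleton]
      exact fun h => hk2 h.symm
    have h3 : c (m + ((n-1:ℕ) : Fin n)) + c (m + ((1:ℕ) : Fin n)) + c k ≤ ∑ j, c j := by
      have := Finset.sum_le_sum_of_subset hsub (f := c)
      rwa [Finset.sum_insert nm1, Finset.sum_insert nm2, Finset.sum_singleton,
        ← add_assoc] at this
    omega
  -- conclude
  have h2z : c (m + ((2:ℕ) : Fin n)) = 0 :=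
    zero _ (fne m 2 (n-1) (by omega) (by omega) (by omega))
      (fne m 2 1 (by omega) (by omega) (by omega))
  have h3z : c (m + ((3:ℕ) : Fin n)) = 0 :=
    zero _ (fne m 3 (n-1) (by omega) (by omega) (by omega))
      (fne m 3 1 (by omega) (by omega) (by omega))
  have hn2z : c (m + ((n-2:ℕ) : Fin n)) = 0 :=
    zero _ (fne m (n-2) (n-1) (by omega) (by omega) (by omega))
      (fne m (n-2) 1 (by omega) (by omega) (by omega))
  have hn3z : c (m + ((n-3:ℕ) : Fin n)) = 0 :=
    zero _ (fne m (n-3) (n-1) (by omega) (by omega) (by omega))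
      (fne m (n-3) 1 (by omega) (by omega) (by omega))
  have hkey2 := key _ h2z
  rw [addcast, addcast] at hkey2
  have e1 : ((2 + (n-1) : ℕ) : Fin n) = ((1 : ℕ) : Fin n) := by
    have : 2 + (n-1) = 1 + n := by omega
    rw [this, castmod]
  have e2 : ((2 + 1 : ℕ) : Fin n) = ((3 : ℕ) : Fin n) := by norm_num
  rw [e1, e2] at hkey2
  have hc1 : n - 1 ≤ c (m + ((1:ℕ) : Fin n)) := by omega
  have hkeyn2 := key _ hn2z
  rw [addcast, addcast] at hkeyn2
  have e3 : ((n-2 + (n-1) : ℕ) : Fin n) = ((n-3 : ℕ) : Fin n) := by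
    have : n-2 + (n-1) = (n-3) + n := by omega
    rw [this, castmod]
  have e4 : ((n-2 + 1 : ℕ) : Fin n) = ((n-1 : ℕ) : Fin n) := by
    have : n-2+1 = n-1 := by omega
    rw [this]
  rw [e3, e4] at hkeyn2
  have hc2 : n - 1 ≤ c (m + ((n-1:ℕ) : Fin n)) := by omega
  omega

end Aux

/-- For every `n ≥ 5`, `ι(K_n □ C_n) = n`. -/
theorem isolation_completeGraph_boxProd_cycleGraph (n : ℕ) (hn : 5 ≤ n) :
    isolationNum ((⊤ : SimpleGraph (Fin n)).boxProd (SimpleGraph.cycleGraph n)) = n := by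
  have hmem : n ∈ {m | ∃ A : Set (Fin n × Fin n),
      IsIsolating ((⊤ : SimpleGraph (Fin n)).boxProd (SimpleGraph.cycleGraph n)) A ∧
      A.ncard = m} := by
    refine ⟨Set.range fun i : Fin n => (i, i), diag_isolating, ?_⟩
    rw [Set.ncard_eq_toFinset_card']
    rw [Set.toFinset_range]
    rw [Finset.card_image_of_injective _ (fun a b h => by simpa using (Prod.ext_iff.mp h).1)]
    simp
  refine le_antisymm (Nat.sInf_le hmem) (le_csInf ⟨n, hmem⟩ ?_)
  rintro m ⟨A, hA, rfl⟩
  exact lower_bound hn A hA
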